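/- Theorem (unbraiding): Let A be an associative algebra, and let M(λ) be a 2×2 matrix with entries in A depending on a parameter λ, satisfying the braided Yang–Baxter relation R_{ab}(λ/λ') M_a(λ) Z_{ab}^{-1} M_b(λ') = M_b(λ') Z_{ba}^{-1} M_a(λ) R_{ab}(λ/λ') on the tensor product of two auxiliary spaces. Suppose there exists an invertible 2×2 matrix D with entries in A such that (i) M_a(λ) = D_b M_a(λ) D_b^{-1} Z_{ab}, (ii) [D_a D_b, R_{ab}(ξ)] = 0 for all ξ, (iii) [D_a, D_b] = 0, and suppose the numerical matrices satisfy Z_{ab} R_{ab}(ξ) = R_{ab}(ξ) Z_{ba}. Then the matrix M̃(λ) = D^{-1} M(λ) D satisfies the (unbraided) Yang–Baxter relation R_{ab}(λ/λ') M̃_a(λ) M̃_b(λ') = M̃_b(λ') M̃_a(λ) R_{ab}(λ/λ'). -/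
import Mathlib

open Matrix Complex

noncomputable section

abbrev M2 (A : Type*) := Matrix (Fin 2) (Fin 2) A
abbrev M4 (A : Type*) := Matrix (Fin 2 × Fin 2) (Fin 2 × Fin 2) A

/-- `X ⊗ Id` : the embedding of a 2×2 matrix into auxiliary space `a`. -/
def embA {A : Type*} [Zero A] (X : M2 A) : M4 A :=
  fun p q => if p.2 = q.2 then X p.1 q.1 else 0

/-- `Id ⊗ X` : the embedding of a 2×2 matrix into auxiliary space `b`. -/
def embB {A : Type*} [Zero A] (X : M2 A) : M4 A :=
  fun p q => if p.1 = q.1 then X p.2 q.2 else 0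

/-- The trigonometric R-matrix. -/
def Rmat (q ξ : ℂ) : M4 ℂ :=
  fun p r =>
    if p = r then (if p.1 = p.2 then 1 else (ξ⁻¹ - ξ) / (q⁻¹ * ξ⁻¹ - q * ξ))
    else if p.1 = r.2 ∧ p.2 = r.1 then (q⁻¹ - q) / (q⁻¹ * ξ⁻¹ - q * ξ)
    else 0

/-- The R-matrix with (scalar) entries viewed inside the algebra `A`. -/
def RA (A : Type*) [Ring A] [Algebra ℂ A] (q ξ : ℂ) : M4 A :=
  (Rmat q ξ).map (algebraMap ℂ A)

/-- Z = diag(q^{-1/2}, q^{1/2}, q^{1/2}, q^{-1/2}), written via `s = q^{1/2}`. -/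
def Zmat (s : ℂ) : M4 ℂ :=
  Matrix.diagonal (fun p => if p.1 = p.2 then s⁻¹ else s)

/-- The permutation (swap) matrix on ℂ²⊗ℂ². -/
def Pswap : M4 ℂ := fun p q => if p.1 = q.2 ∧ p.2 = q.1 then 1 else 0

section AuxLemmas

set_option linter.unusedSectionVars false

variable {A : Type*} [Ring A] [Algebra ℂ A]

lemma embA_mul (X Y : M2 A) : embA (X * Y) = embA X * embA Y := by
  ext ⟨p1, p2⟩ ⟨q1, q2⟩
  fin_cases p2 <;> fin_cases q2 <;>
    simp [embA, Matrix.mul_apply, Fintype.sum_prod_type, Fin.sum_univ_two]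

lemma embB_mul (X Y : M2 A) : embB (X * Y) = embB X * embB Y := by
  ext ⟨p1, p2⟩ ⟨q1, q2⟩
  fin_cases p1 <;> fin_cases q1 <;>
    simp [embB, Matrix.mul_apply, Fintype.sum_prod_type, Fin.sum_univ_two]

lemma embA_one : embA (1 : M2 A) = 1 := by
  ext ⟨p1, p2⟩ ⟨q1, q2⟩
  simp only [embA, Matrix.one_apply, Prod.ext_iff]
  split_ifs <;> simp_all

lemma embB_one : embB (1 : M2 A) = 1 := by
  ext ⟨p1, p2⟩ ⟨q1, q2⟩
  simp only [embB, Matrix.one_apply, Prod.ext_iff]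
  split_ifs <;> simp_all

lemma Pswap_sq : Pswap * Pswap = 1 := by
  ext ⟨p1, p2⟩ ⟨q1, q2⟩
  fin_cases p1 <;> fin_cases p2 <;> fin_cases q1 <;> fin_cases q2 <;>
    simp [Pswap, Matrix.mul_apply, Matrix.one_apply, Fintype.sum_prod_type,
      Fin.sum_univ_two, Prod.ext_iff]

lemma Pswap_embA (X : M2 A) :
    Pswap.map (algebraMap ℂ A) * embA X = embB X * Pswap.map (algebraMap ℂ A) := by
  ext ⟨p1, p2⟩ ⟨q1, q2⟩
  fin_cases p1 <;> fin_cases p2 <;> fin_cases q1 <;> fin_cases q2 <;>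
    simp [Pswap, embA, embB, Matrix.mul_apply, Matrix.map_apply,
      Fintype.sum_prod_type, Fin.sum_univ_two]

lemma Pswap_embB (X : M2 A) :
    Pswap.map (algebraMap ℂ A) * embB X = embA X * Pswap.map (algebraMap ℂ A) := by
  ext ⟨p1, p2⟩ ⟨q1, q2⟩
  fin_cases p1 <;> fin_cases p2 <;> fin_cases q1 <;> fin_cases q2 <;>
    simp [Pswap, embA, embB, Matrix.mul_apply, Matrix.map_apply,
      Fintype.sum_prod_type, Fin.sum_univ_two]

/-- The swap (`Pswap`-conjugated) version of condition (i). -/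
lemma swap_cond1 (X D Dinv : M2 A) (Z : M4 ℂ)
    (h : embA X = embB D * embA X * embB Dinv * Z.map (algebraMap ℂ A)) :
    embB X
      = embA D * embB X * embA Dinv * (Pswap * Z * Pswap).map (algebraMap ℂ A) := by
  set φ := algebraMap ℂ A with hφ
  set P' : M4 A := Pswap.map φ with hP'
  have hPP : P' * P' = 1 := by
    rw [hP', ← Matrix.map_mul, Pswap_sq, Matrix.map_one _ (map_zero φ) (map_one φ)]
  have hA : ∀ (Y : M2 A) (z : M4 A), P' * (embA Y * z) = embB Y * (P' * z) :=
    fun Y z => by simpa only [mul_assoc] using congrArg (· * z) (Pswap_embA Y)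
  have hB : ∀ (Y : M2 A) (z : M4 A), P' * (embB Y * z) = embA Y * (P' * z) :=
    fun Y z => by simpa only [mul_assoc] using congrArg (· * z) (Pswap_embB Y)
  have hZconj : P' * (Z.map φ * P') = (Pswap * Z * Pswap).map φ := by
    rw [hP', ← mul_assoc, ← Matrix.map_mul, ← Matrix.map_mul]
  have h2 := congrArg (fun t => P' * t * P') h
  simp only [mul_assoc] at h2
  rw [hA X, hB D, hA X, hB Dinv, hPP, mul_one, hZconj] at h2
  simpa only [mul_assoc] using h2

end AuxLemmas

/-- Unbraiding theorem: a matrix satisfying the braided Yang–Baxter relation,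
conjugated by a matrix `D` satisfying conditions (i)–(iii), satisfies the usual
Yang–Baxter relation, provided `Z_{ab} R_{ab}(ξ) = R_{ab}(ξ) Z_{ba}`. -/
theorem unbraiding {A : Type*} [Ring A] [Algebra ℂ A]
    (M : ℂ → M2 A) (R : ℂ → M4 ℂ) (Z Zinv : M4 ℂ)
    (hZ : Z * Zinv = 1) (hZ' : Zinv * Z = 1)
    (D Dinv : M2 A) (hD : D * Dinv = 1) (hD' : Dinv * D = 1)
    -- braided Yang-Baxter relation, with Z_{ba} = P Z_{ab} P
    (hbraid : ∀ lam lam' : ℂ,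
      (R (lam / lam')).map (algebraMap ℂ A) * embA (M lam) *
          (Zinv.map (algebraMap ℂ A)) * embB (M lam')
        = embB (M lam') * ((Pswap * Zinv * Pswap).map (algebraMap ℂ A)) *
            embA (M lam) * (R (lam / lam')).map (algebraMap ℂ A))
    -- condition (i): M_a(λ) = D_b M_a(λ) D_b⁻¹ Z_{ab}
    (hcond1 : ∀ lam : ℂ,
      embA (M lam) = embB D * embA (M lam) * embB Dinv * (Z.map (algebraMap ℂ A)))
    -- condition (ii): [D_a D_b, R_{ab}(ξ)] = 0
    (hcond2 : ∀ ξ : ℂ,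
      embA D * embB D * (R ξ).map (algebraMap ℂ A)
        = (R ξ).map (algebraMap ℂ A) * (embA D * embB D))
    -- condition (iii): [D_a, D_b] = 0
    (hcond3 : embA D * embB D = embB D * embA D)
    -- compatibility: Z_{ab} R_{ab}(ξ) = R_{ab}(ξ) Z_{ba}
    (hcond4 : ∀ ξ : ℂ, Z * R ξ = R ξ * (Pswap * Z * Pswap)) :
    ∀ lam lam' : ℂ,
      (R (lam / lam')).map (algebraMap ℂ A) * embA (Dinv * M lam * D) *
          embB (Dinv * M lam' * D)
        = embB (Dinv * M lam' * D) * embA (Dinv * M lam * D) *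
            (R (lam / lam')).map (algebraMap ℂ A) := by
  intro lam lam'
  simp only [embA_mul, embB_mul]
  have hbr := hbraid lam lam'
  have h1 := hcond1 lam
  have h1' := swap_cond1 (M lam') D Dinv Z (hcond1 lam')
  have h2 := hcond2 (lam / lam')
  have h4 := hcond4 (lam / lam')
  set φ := algebraMap ℂ A with hφ
  set R' := (R (lam / lam')).map φ with hR'
  set Ma := embA (M lam) with hMa
  set Mb := embB (M lam') with hMb
  set a := embA D with ha
  set ai := embA Dinv with hai
  set b := embB D with hb
  set bi := embB Dinv with hbi
  set Z' := Z.map φ with hZ'd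
  set Zi := Zinv.map φ with hZid
  set Zb := (Pswap * Z * Pswap).map φ with hZbd
  set Zbi := (Pswap * Zinv * Pswap).map φ with hZbid
  -- basic inverses
  have haai : a * ai = 1 := by rw [ha, hai, ← embA_mul, hD, embA_one]
  have haia : ai * a = 1 := by rw [ha, hai, ← embA_mul, hD', embA_one]
  have hbbi : b * bi = 1 := by rw [hb, hbi, ← embB_mul, hD, embB_one]
  have hbib : bi * b = 1 := by rw [hb, hbi, ← embB_mul, hD', embB_one]
  have hZZi : Z' * Zi = 1 := by
    rw [hZ'd, hZid, ← Matrix.map_mul, hZ, Matrix.map_one _ (map_zero φ) (map_one φ)]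
  have hZiZ : Zi * Z' = 1 := by
    rw [hZ'd, hZid, ← Matrix.map_mul, hZ', Matrix.map_one _ (map_zero φ) (map_one φ)]
  have hPZ : (Pswap * Z * Pswap) * (Pswap * Zinv * Pswap) = 1 := by
    calc (Pswap * Z * Pswap) * (Pswap * Zinv * Pswap)
        = Pswap * (Z * ((Pswap * Pswap) * (Zinv * Pswap))) := by simp only [mul_assoc]
      _ = Pswap * (Z * (Zinv * Pswap)) := by rw [Pswap_sq, one_mul]
      _ = Pswap * ((Z * Zinv) * Pswap) := by rw [← mul_assoc Z Zinv Pswap]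
      _ = Pswap * Pswap := by rw [hZ, one_mul]
      _ = 1 := Pswap_sq
  have hZbZbi : Zb * Zbi = 1 := by
    rw [hZbd, hZbid, ← Matrix.map_mul, hPZ, Matrix.map_one _ (map_zero φ) (map_one φ)]
  -- cancellation helper
  have cancel : ∀ x y : M4 A, x * y = 1 → ∀ z, x * (y * z) = z :=
    fun x y h z => by rw [← mul_assoc, h, one_mul]
  -- commutation of a,b and inverses
  have comm_inv : ∀ x y yi : M4 A, x * y = y * x → y * yi = 1 → yi * y = 1 →
      x * yi = yi * x := by
    intro x y yi h hy1 hy2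
    calc x * yi = yi * (y * (x * yi)) := (cancel yi y hy2 _).symm
      _ = yi * ((y * x) * yi) := by rw [← mul_assoc y x yi]
      _ = yi * ((x * y) * yi) := by rw [← h]
      _ = yi * (x * (y * yi)) := by rw [mul_assoc x y yi]
      _ = yi * x := by rw [hy1, mul_one]
  have habi : a * bi = bi * a := comm_inv a b bi hcond3 hbbi hbib
  have hbai : b * ai = ai * b := comm_inv b a ai hcond3.symm haai haia
  have haibi : ai * bi = bi * ai := (comm_inv bi a ai habi.symm haai haia).symm
  -- condition (i) consequences
  have hMaZi : Ma * Zi = b * Ma * bi := by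
    conv_lhs => rw [h1]
    rw [mul_assoc (b * Ma * bi) Z' Zi, hZZi, mul_one]
  have hMbZbi : Mb * Zbi = a * Mb * ai := by
    conv_lhs => rw [h1']
    rw [mul_assoc (a * Mb * ai) Zb Zbi, hZbZbi, mul_one]
  have hMabi : Ma * bi = bi * (Ma * Zi) := by
    have h := congrArg (fun t => bi * t) hMaZi
    simp only [mul_assoc] at h
    rw [cancel bi b hbib] at h
    exact h.symm
  have hbMa : b * Ma = Ma * (Zi * b) := by
    have h := congrArg (· * b) hMaZi
    simp only [mul_assoc] at h
    rw [hbib, mul_one] at h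
    exact h.symm
  have hMbai : Mb * ai = ai * (Mb * Zbi) := by
    have h := congrArg (fun t => ai * t) hMbZbi
    simp only [mul_assoc] at h
    rw [cancel ai a haia] at h
    exact h.symm
  have haMb : a * Mb = Mb * (Zbi * a) := by
    have h := congrArg (· * a) hMbZbi
    simp only [mul_assoc] at h
    rw [haia, mul_one] at h
    exact h.symm
  -- R' commutes with ai*bi
  have hinv1 : (a * b) * (bi * ai) = 1 := by
    simp only [mul_assoc]
    rw [cancel b bi hbbi]
    exact haai
  have hinvR : R' * (bi * ai) = bi * (ai * R') := by
    have h := congrArg (fun t => (bi * ai) * t * (bi * ai)) h2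
    simp only [mul_assoc] at h
    rw [cancel ai a haia, cancel bi b hbib, cancel b bi hbbi, haai, mul_one] at h
    exact h
  have hinvR2 : R' * (ai * bi) = (ai * bi) * R' := by
    rw [haibi, hinvR, ← mul_assoc]
  -- R' and Zbi
  have h4A : Z' * R' = R' * Zb := by
    rw [hZ'd, hR', hZbd, ← Matrix.map_mul, ← Matrix.map_mul, h4]
  have hRZbi : R' * Zbi = Zi * R' := by
    calc R' * Zbi = (Zi * Z') * (R' * Zbi) := by rw [hZiZ, one_mul]
      _ = Zi * ((Z' * R') * Zbi) := by simp only [mul_assoc]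
      _ = Zi * ((R' * Zb) * Zbi) := by rw [h4A]
      _ = Zi * (R' * (Zb * Zbi)) := by rw [mul_assoc R' Zb Zbi]
      _ = Zi * R' := by rw [hZbZbi, mul_one]
  -- z-extended push lemmas
  have L1 : ∀ z : M4 A, a * (bi * z) = bi * (a * z) :=
    fun z => by simpa only [mul_assoc] using congrArg (· * z) habi
  have L2 : ∀ z : M4 A, a * (Mb * z) = Mb * (Zbi * (a * z)) :=
    fun z => by simpa only [mul_assoc] using congrArg (· * z) haMb
  have L3 : ∀ z : M4 A, Ma * (bi * z) = bi * (Ma * (Zi * z)) :=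
    fun z => by simpa only [mul_assoc] using congrArg (· * z) hMabi
  have L4 : ∀ z : M4 A, R' * (ai * (bi * z)) = ai * (bi * (R' * z)) :=
    fun z => by simpa only [mul_assoc] using congrArg (· * z) hinvR2
  have L5 : ∀ z : M4 A, R' * (Ma * (Zi * (Mb * z))) = Mb * (Zbi * (Ma * (R' * z))) :=
    fun z => by simpa only [mul_assoc] using congrArg (· * z) hbr
  have L6 : ∀ z : M4 A, R' * (Zbi * z) = Zi * (R' * z) :=
    fun z => by simpa only [mul_assoc] using congrArg (· * z) hRZbi
  have R1 : ∀ z : M4 A, b * (ai * z) = ai * (b * z) :=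
    fun z => by simpa only [mul_assoc] using congrArg (· * z) hbai
  have R2 : ∀ z : M4 A, b * (Ma * z) = Ma * (Zi * (b * z)) :=
    fun z => by simpa only [mul_assoc] using congrArg (· * z) hbMa
  have R3 : ∀ z : M4 A, Mb * (ai * z) = ai * (Mb * (Zbi * z)) :=
    fun z => by simpa only [mul_assoc] using congrArg (· * z) hMbai
  have R4 : ∀ z : M4 A, bi * (ai * z) = ai * (bi * z) :=
    fun z => by simpa only [mul_assoc] using congrArg (· * z) haibi.symm
  have R5 : b * (a * R') = R' * (a * b) := by
    calc b * (a * R') = (b * a) * R' := (mul_assoc b a R').symm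
      _ = (a * b) * R' := by rw [← hcond3]
      _ = R' * (a * b) := h2
  have hRHS : bi * Mb * b * (ai * Ma * a) * R'
      = ai * (bi * (Mb * (Zbi * (Ma * (Zi * (R' * (a * b))))))) := by
    calc bi * Mb * b * (ai * Ma * a) * R'
        = bi * (Mb * (b * (ai * (Ma * (a * R'))))) := by simp only [mul_assoc]
      _ = bi * (Mb * (ai * (b * (Ma * (a * R'))))) := by rw [R1]
      _ = bi * (Mb * (ai * (Ma * (Zi * (b * (a * R')))))) := by rw [R2]
      _ = bi * (ai * (Mb * (Zbi * (Ma * (Zi * (b * (a * R'))))))) := by rw [R3]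
      _ = ai * (bi * (Mb * (Zbi * (Ma * (Zi * (b * (a * R'))))))) := by rw [R4]
      _ = ai * (bi * (Mb * (Zbi * (Ma * (Zi * (R' * (a * b))))))) := by rw [R5]
  calc R' * (ai * Ma * a) * (bi * Mb * b)
      = R' * (ai * (Ma * (a * (bi * (Mb * b))))) := by simp only [mul_assoc]
    _ = R' * (ai * (Ma * (bi * (a * (Mb * b))))) := by rw [L1]
    _ = R' * (ai * (Ma * (bi * (Mb * (Zbi * (a * b)))))) := by rw [L2]
    _ = R' * (ai * (bi * (Ma * (Zi * (Mb * (Zbi * (a * b))))))) := by rw [L3]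
    _ = ai * (bi * (R' * (Ma * (Zi * (Mb * (Zbi * (a * b))))))) := by rw [L4]
    _ = ai * (bi * (Mb * (Zbi * (Ma * (R' * (Zbi * (a * b))))))) := by rw [L5]
    _ = ai * (bi * (Mb * (Zbi * (Ma * (Zi * (R' * (a * b))))))) := by rw [L6]
    _ = bi * Mb * b * (ai * Ma * a) * R' := hRHS.symm
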